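/- For every real number a, every real φ₀, and every integer n ≥ 0, one has |∫_0^{2π} e^{i a cos(φ − φ₀)} e^{i n φ} dφ| ≤ 2π e^{−n} e^{|a| e / 2}. -/

import Mathlib

open Complex intervalIntegral Real Set

noncomputable def F (a φ₀ : ℝ) (n : ℕ) : ℂ → ℂ :=
  fun z => Complex.exp (Complex.I * ((a : ℂ) * Complex.cos (z - (φ₀ : ℂ)))) *
    Complex.exp (Complex.I * (n : ℂ) * z)

lemma F_diff (a φ₀ : ℝ) (n : ℕ) : Differentiable ℂ (F a φ₀ n) := by
  unfold F
  fun_prop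

lemma F_periodic (a φ₀ : ℝ) (n : ℕ) (z : ℂ) : F a φ₀ n (z + 2 * Real.pi) = F a φ₀ n z := by
  unfold F
  have h1 : (z + 2 * Real.pi) - (φ₀ : ℂ) = (z - φ₀) + 2 * Real.pi := by ring
  rw [h1]
  have hc : Complex.cos ((z - φ₀) + 2 * Real.pi) = Complex.cos (z - φ₀) := by
    rw [Complex.cos_add_two_pi]
  rw [hc]
  congr 1
  have : Complex.I * (n : ℂ) * (z + 2 * Real.pi) = Complex.I * (n : ℂ) * z
      + (n : ℤ) * (2 * Real.pi * Complex.I) := by push_cast; ring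
  rw [this, Complex.exp_add, Complex.exp_int_mul_two_pi_mul_I, mul_one]

lemma F_bound (a φ₀ : ℝ) (n : ℕ) (x : ℝ) :
    ‖F a φ₀ n ((x : ℂ) + 1 * Complex.I)‖ ≤ Real.exp (-(n : ℝ)) * Real.exp (|a| * Real.exp 1 / 2) := by
  unfold F
  rw [norm_mul, Complex.norm_exp, Complex.norm_exp]
  have hcos : Complex.cos (((x : ℂ) + 1 * Complex.I) - (φ₀ : ℂ))
      = Complex.cos (((x - φ₀ : ℝ) : ℂ) + Complex.I) := by push_cast; ring_nf
  rw [hcos]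
  set t : ℝ := x - φ₀
  have him : (Complex.I * ((a : ℂ) * Complex.cos ((t : ℂ) + Complex.I))).re
      = a * (Real.sin t * Real.sinh 1) := by
    have hI : (Complex.I) = ((1:ℝ):ℂ) * Complex.I := by norm_num
    rw [Complex.cos_add, hI, Complex.cos_mul_I, Complex.sin_mul_I]
    simp [Complex.mul_re, Complex.mul_im, Complex.cosh_ofReal_re, Complex.sinh_ofReal_re,
      Complex.cos_ofReal_re, Complex.sin_ofReal_re, Complex.cosh_ofReal_im,
      Complex.sinh_ofReal_im, Complex.cos_ofReal_im, Complex.sin_ofReal_im]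
    have e1 : (Complex.cosh 1).im = 0 := by
      rw [← Complex.ofReal_one, Complex.cosh_ofReal_im]
    have e2 : (Complex.sinh 1).re = Real.sinh 1 := by
      rw [← Complex.ofReal_one, Complex.sinh_ofReal_re]
    rw [e1, e2]
    ring
  have hre2 : (Complex.I * (n : ℂ) * ((x : ℂ) + 1 * Complex.I)).re = -(n : ℝ) := by
    simp [Complex.mul_re, Complex.mul_im]
  rw [him, hre2, mul_comm (Real.exp _)]
  gcongr
  have hs : Real.sinh 1 ≤ Real.exp 1 / 2 := by
    rw [Real.sinh_eq]
    have : (0:ℝ) < Real.exp (-1) := Real.exp_pos _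
    linarith
  calc a * (Real.sin t * Real.sinh 1) ≤ |a * (Real.sin t * Real.sinh 1)| := le_abs_self _
    _ = |a| * (|Real.sin t| * |Real.sinh 1|) := by rw [abs_mul, abs_mul]
    _ ≤ |a| * (1 * (Real.exp 1 / 2)) := by
        gcongr
        · exact Real.abs_sin_le_one t
        · rw [_root_.abs_of_nonneg (by positivity : (0:ℝ) ≤ Real.sinh 1)]; exact hs
    _ = |a| * Real.exp 1 / 2 := by ring

theorem stmt16 (a φ₀ : ℝ) (n : ℕ) :
    ‖∫ φ in (0 : ℝ)..(2 * Real.pi),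
        Complex.exp (Complex.I * ((a * Real.cos (φ - φ₀) : ℝ) : ℂ)) *
          Complex.exp (Complex.I * (n : ℂ) * (φ : ℂ))‖ ≤
      2 * Real.pi * Real.exp (-(n : ℝ)) * Real.exp (|a| * Real.exp 1 / 2) := by
  set f := F a φ₀ n with hf
  -- rewrite the integrand as f restricted to the real line
  have heq : (∫ φ in (0 : ℝ)..(2 * Real.pi),
        Complex.exp (Complex.I * ((a * Real.cos (φ - φ₀) : ℝ) : ℂ)) *
          Complex.exp (Complex.I * (n : ℂ) * (φ : ℂ)))
      = ∫ x in (0 : ℝ)..(2 * Real.pi), f ((x : ℂ) + (0:ℝ) * Complex.I) := by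
    refine intervalIntegral.integral_congr fun x _ => ?_
    simp only [hf, F]
    push_cast
    norm_num
  -- Cauchy for the rectangle [0, 2π] × [0, 1]
  have hrect := Complex.integral_boundary_rect_eq_zero_of_differentiableOn f
    (0 : ℂ) ((2 * Real.pi : ℝ) + Complex.I) ((F_diff a φ₀ n).differentiableOn)
  simp only [Complex.add_re, Complex.ofReal_re, Complex.I_re, add_zero, Complex.add_im,
    Complex.ofReal_im, Complex.I_im, zero_add, Complex.zero_re, Complex.zero_im] at hrect
  -- the two vertical integrals cancel by periodicity
  have hvert : (∫ y : ℝ in (0:ℝ)..1, f ((2 * Real.pi : ℝ) + (y : ℂ) * Complex.I))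
      = ∫ y : ℝ in (0:ℝ)..1, f ((0 : ℝ) + (y : ℂ) * Complex.I) := by
    refine intervalIntegral.integral_congr fun y _ => ?_
    have := F_periodic a φ₀ n ((0:ℝ) + (y : ℂ) * Complex.I)
    rw [hf]
    rw [← this]
    congr 1
    push_cast
    ring
  rw [hvert] at hrect
  have hshift : (∫ x in (0 : ℝ)..(2 * Real.pi), f ((x : ℂ) + ((0:ℝ):ℂ) * Complex.I))
      = ∫ x in (0 : ℝ)..(2 * Real.pi), f ((x : ℂ) + ((1:ℝ):ℂ) * Complex.I) := by
    have h0 : ((0:ℝ):ℂ) = ((0:ℂ)) := by norm_num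
    have h1 : ((1:ℝ):ℂ) = ((1:ℂ)) := by norm_num
    rw [h0, h1]
    simp only [smul_eq_mul] at hrect
    push_cast at hrect ⊢
    linear_combination hrect
  rw [heq]
  push_cast at hshift ⊢
  rw [hshift]
  have hb := intervalIntegral.norm_integral_le_of_norm_le_const
    (C := Real.exp (-(n : ℝ)) * Real.exp (|a| * Real.exp 1 / 2))
    (f := fun x : ℝ => f ((x : ℂ) + 1 * Complex.I)) (a := (0:ℝ)) (b := 2 * Real.pi) ?_
  · calc ‖∫ x in (0:ℝ)..(2*Real.pi), f ((x:ℂ) + 1 * Complex.I)‖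
        ≤ Real.exp (-(n : ℝ)) * Real.exp (|a| * Real.exp 1 / 2) * |2 * Real.pi - 0| := hb
      _ = 2 * Real.pi * Real.exp (-(n : ℝ)) * Real.exp (|a| * Real.exp 1 / 2) := by
          rw [sub_zero, _root_.abs_of_nonneg (by positivity : (0:ℝ) ≤ 2 * Real.pi)]; ring
  · intro x _
    exact F_bound a φ₀ n x
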